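/- Let G be an undirected graph on N vertices and let G₂ be the complete graph on N vertices. Assign every vertex of each graph to its own block (B₁ = B₂ = N), and consider selecting s = k shared blocks with pooled parameters on shared pairs and free parameters elsewhere, as in the SSBM-fixed problem. Then there is a choice of shared blocks achieving total log-likelihood 0 if and only if G contains a clique of size k. -/
import Mathlib


/-- Log-likelihood contribution of an ordered pair of distinct singleton blocks in
the k-clique reduction: graph 1 has edge indicator `c ∈ {0,1}`, graph 2 (complete)
always has an edge.  If the pair is shared, both graphs use the pooled MLE
`θ = (c+1)/2`; otherwise each graph uses its own MLE (`c` resp. `1`).  The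
convention `0·log 0 = 0` holds since `Real.log 0 = 0`. -/
noncomputable def cliquePairTerm (c : ℝ) (shared : Bool) : ℝ :=
  (c * Real.log (if shared then (c + 1) / 2 else c) +
    (1 - c) * Real.log (1 - (if shared then (c + 1) / 2 else c))) +
  (1 * Real.log (if shared then (c + 1) / 2 else 1) +
    0 * Real.log (1 - (if shared then (c + 1) / 2 else 1)))

open Finset in
/-- The SSBM-fixed objective of the k-clique reduction with singleton blocks,
where `W` is the set of vertices of `G` whose blocks are shared with the complete
graph: the total log-likelihood summed over all ordered pairs of distinct
vertices. -/
noncomputable def cliqueReductionObj {V : Type*} [Fintype V] [DecidableEq V]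
    (G : SimpleGraph V) [DecidableRel G.Adj] (W : Finset V) : ℝ :=
  ∑ p ∈ (Finset.univ : Finset V).offDiag,
    cliquePairTerm (if G.Adj p.1 p.2 then (1 : ℝ) else 0)
      (decide (p.1 ∈ W ∧ p.2 ∈ W))

lemma cliquePairTerm_one (b : Bool) : cliquePairTerm 1 b = 0 := by
  cases b <;> norm_num [cliquePairTerm]

lemma cliquePairTerm_zero_false : cliquePairTerm 0 false = 0 := by
  norm_num [cliquePairTerm]

lemma cliquePairTerm_zero_true : cliquePairTerm 0 true = 2 * Real.log (1/2) := by
  norm_num [cliquePairTerm]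
  ring

lemma cliquePairTerm_nonpos (c : ℝ) (hc : c = 0 ∨ c = 1) (b : Bool) :
    cliquePairTerm c b ≤ 0 := by
  rcases hc with h | h <;> subst h
  · cases b
    · rw [cliquePairTerm_zero_false]
    · rw [cliquePairTerm_zero_true]
      have : Real.log (1/2) < 0 := Real.log_neg (by norm_num) (by norm_num)
      linarith
  · rw [cliquePairTerm_one]

/-- There is a choice of `k` shared singleton blocks achieving total
log-likelihood `0` iff `G` contains a clique of size `k`. -/
theorem cliqueReduction_zero_iff_kclique {V : Type*} [Fintype V] [DecidableEq V]
    (G : SimpleGraph V) [DecidableRel G.Adj] (k : ℕ) (hk : k ≤ Fintype.card V) :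
    (∃ W : Finset V, W.card = k ∧ cliqueReductionObj G W = 0) ↔
    ∃ W : Finset V, G.IsNClique k W := by
  constructor
  · rintro ⟨W, hWk, hobj⟩
    refine ⟨W, ?_, hWk⟩
    intro x hx y hy hxy
    by_contra hadj
    have hmem : ((x, y) : V × V) ∈ (Finset.univ : Finset V).offDiag := by
      simp [Finset.mem_offDiag, hxy]
    have hterm := (Finset.sum_eq_zero_iff_of_nonpos (fun p _ =>
      cliquePairTerm_nonpos _ (by split <;> simp) _)).mp hobj _ hmem
    simp only [hadj, if_neg, if_false] at hterm
    have hs : decide ((x,y).1 ∈ W ∧ (x,y).2 ∈ W) = true := by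
      simp only [decide_eq_true_eq]
      exact ⟨hx, hy⟩
    rw [hs, cliquePairTerm_zero_true] at hterm
    have : Real.log (1/2) < 0 := Real.log_neg (by norm_num) (by norm_num)
    linarith
  · rintro ⟨W, hW⟩
    refine ⟨W, hW.2, Finset.sum_eq_zero fun p hp => ?_⟩
    by_cases hadj : G.Adj p.1 p.2
    · rw [if_pos hadj, cliquePairTerm_one]
    · rw [if_neg hadj]
      have hs : ¬ (p.1 ∈ W ∧ p.2 ∈ W) := by
        rintro ⟨h1, h2⟩
        exact hadj (hW.1 h1 h2 (Finset.mem_offDiag.mp hp).2.2)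
      simp only [decide_eq_false hs]
      exact cliquePairTerm_zero_false
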